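/- Let ω₀ be a Schwartz-class function on 𝕋 × ℝ with Fourier transform bounded: |ω̃₀(k,ξ)| ≤ M·⟨k,ξ⟩^{−4} for all k ∈ ℤ, ξ ∈ ℝ. Let ψ(t) solve Δψ(t) = ω₀(x−yt, y) on 𝕋 × ℝ. Then for each nonzero integer k and t ≥ 0, the Fourier transform satisfies |ψ̃(t,k,ξ)| = |ω̃₀(k,ξ+kt)|/(k²+ξ²), and consequently ‖ψ̃(t,k,·)‖_{L²_ξ} ≤ C·M·k^{−2}·⟨t⟩^{−2} for an absolute constant C. -/
import Mathlib

open MeasureTheory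

noncomputable def jap (k : ℤ) (ξ : ℝ) : ℝ := Real.sqrt (1 + (k : ℝ) ^ 2 + ξ ^ 2)

lemma jap_rpow (k : ℤ) (η : ℝ) :
    jap k η ^ (-4 : ℝ) = ((1 + (k : ℝ) ^ 2 + η ^ 2) ^ 2)⁻¹ := by
  unfold jap
  have hS : (0:ℝ) ≤ 1 + (k : ℝ) ^ 2 + η ^ 2 := by positivity
  have h4 : Real.sqrt (1 + (k : ℝ) ^ 2 + η ^ 2) ^ (4:ℕ) = (1 + (k : ℝ) ^ 2 + η ^ 2) ^ 2 := by
    rw [show (4:ℕ) = 2 * 2 from rfl, pow_mul, Real.sq_sqrt hS]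
  rw [show (-4:ℝ) = -((4:ℕ):ℝ) by norm_num, Real.rpow_neg (Real.sqrt_nonneg _),
    Real.rpow_natCast, h4]

lemma key_ineq (k t ξ : ℝ) (hk : 1 ≤ k ^ 2) :
    k ^ 2 * (1 + t ^ 2) ≤ 4 * ((1 + k ^ 2 + (ξ + k * t) ^ 2) * (k ^ 2 + ξ ^ 2)) := by
  rcases le_or_gt ((k * t) ^ 2 / 4) (ξ ^ 2) with h | h
  · nlinarith [sq_nonneg (ξ + k * t), sq_nonneg ξ, sq_nonneg (k * t),
      mul_nonneg (add_nonneg (sq_nonneg k) (sq_nonneg ξ)) (sq_nonneg (ξ + k * t))]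
  · nlinarith [sq_nonneg (2 * ξ + k * t), sq_nonneg ξ, sq_nonneg (k * t),
      mul_nonneg (add_nonneg (sq_nonneg k) (sq_nonneg ξ)) (sq_nonneg (ξ + k * t)),
      mul_le_mul_of_nonneg_left hk (sq_nonneg (k * t))]

set_option maxHeartbeats 1600000 in
lemma ptbound (k t ξ M a : ℝ) (hk2 : 1 ≤ k ^ 2) (hM : 0 ≤ M) (ha0 : 0 ≤ a)
    (ha : a ≤ M * ((1 + k ^ 2 + (ξ + k * t) ^ 2) ^ 2)⁻¹) :
    (a / (k ^ 2 + ξ ^ 2)) ^ 2 ≤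
      16 * M ^ 2 / (k ^ 2 * (1 + t ^ 2)) ^ 2 * (1 + (ξ + k * t) ^ 2)⁻¹ := by
  set η : ℝ := ξ + k * t with hη
  set S : ℝ := 1 + k ^ 2 + η ^ 2 with hSdef
  set D : ℝ := k ^ 2 + ξ ^ 2 with hDdef
  set Q : ℝ := k ^ 2 * (1 + t ^ 2) with hQdef
  have hS1 : (1:ℝ) ≤ S := by rw [hSdef]; nlinarith [sq_nonneg η]
  have hS0 : (0:ℝ) ≤ S := by linarith
  have hD : (0:ℝ) < D := by rw [hDdef]; positivity
  have hQ : (0:ℝ) < Q := by rw [hQdef]; positivity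
  have hE : (0:ℝ) < 1 + η ^ 2 := by positivity
  have hηS : 1 + η ^ 2 ≤ S := by rw [hSdef]; nlinarith
  have hQSD : Q ≤ 4 * (S * D) := by
    rw [hQdef, hSdef, hDdef, hη]; exact key_ineq k t ξ hk2
  rw [← div_eq_mul_inv] at ha
  have haS : a * S ^ 2 ≤ M := (le_div_iff₀ (by positivity)).mp ha
  have h1 : a ^ 2 * S ^ 4 ≤ M ^ 2 := by
    nlinarith [mul_self_le_mul_self (mul_nonneg ha0 (sq_nonneg S)) haS]
  have h2 : Q ^ 2 ≤ 16 * (S * D) ^ 2 := by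
    nlinarith [mul_self_le_mul_self hQ.le hQSD]
  have hgoal : a ^ 2 * (Q ^ 2 * (1 + η ^ 2)) ≤ 16 * M ^ 2 * D ^ 2 := by
    have step1 : a ^ 2 * (Q ^ 2 * (1 + η ^ 2)) ≤ a ^ 2 * (16 * (S * D) ^ 2 * S) := by
      apply mul_le_mul_of_nonneg_left _ (sq_nonneg a)
      calc Q ^ 2 * (1 + η ^ 2) ≤ 16 * (S * D) ^ 2 * (1 + η ^ 2) :=
            mul_le_mul_of_nonneg_right h2 hE.le
        _ ≤ 16 * (S * D) ^ 2 * S := mul_le_mul_of_nonneg_left hηS (by positivity)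
    have hS3 : a ^ 2 * S ^ 3 ≤ M ^ 2 := by
      nlinarith [h1, mul_nonneg (mul_nonneg (sq_nonneg a) (pow_nonneg hS0 3))
        (sub_nonneg.mpr hS1)]
    have step2 : a ^ 2 * (16 * (S * D) ^ 2 * S) ≤ 16 * M ^ 2 * D ^ 2 := by
      nlinarith [mul_le_mul_of_nonneg_right hS3 (sq_nonneg D)]
    linarith
  rw [div_pow, ← div_eq_mul_inv, div_div, div_le_div_iff₀ (by positivity) (by positivity)]
  nlinarith [hgoal]

theorem stream_function_decay :
    ∃ C > (0 : ℝ), ∀ (M : ℝ) (F Ψ : ℤ → ℝ → ℂ) (t : ℝ), 0 ≤ t →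
      (∀ (k : ℤ) (ξ : ℝ), ‖F k ξ‖ ≤ M * jap k ξ ^ (-4 : ℝ)) →
      (∀ (k : ℤ) (ξ : ℝ), Ψ k ξ = -F k (ξ + (k : ℝ) * t) / ((k : ℝ) ^ 2 + ξ ^ 2)) →
      ∀ (k : ℤ), k ≠ 0 →
        (∀ ξ : ℝ, ‖Ψ k ξ‖ = ‖F k (ξ + (k : ℝ) * t)‖ / ((k : ℝ) ^ 2 + ξ ^ 2)) ∧
        Real.sqrt (∫ ξ : ℝ, ‖Ψ k ξ‖ ^ 2) ≤ C * M / (k : ℝ) ^ 2 / (1 + t ^ 2) := by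
  refine ⟨8, by norm_num, ?_⟩
  intro M F Ψ t ht hF hΨ k hk
  have hM : 0 ≤ M := by
    have h := (norm_nonneg (F 1 0)).trans (hF 1 0)
    have hc : (0:ℝ) < jap 1 0 ^ (-4 : ℝ) :=
      Real.rpow_pos_of_pos (by unfold jap; positivity) _
    nlinarith
  have hk2 : (1:ℝ) ≤ (k:ℝ) ^ 2 := by
    have : (1:ℤ) ≤ k ^ 2 := by
      rcases lt_or_gt_of_ne hk with h | h <;> nlinarith
    exact_mod_cast this
  have hDpos : ∀ ξ : ℝ, (0:ℝ) < (k:ℝ) ^ 2 + ξ ^ 2 := fun ξ => by positivity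
  have hnorm : ∀ ξ : ℝ, ‖Ψ k ξ‖ = ‖F k (ξ + (k : ℝ) * t)‖ / ((k : ℝ) ^ 2 + ξ ^ 2) := by
    intro ξ
    rw [hΨ k ξ, norm_div, norm_neg]
    congr 1
    rw [show (((k:ℝ):ℂ) ^ 2 + (ξ:ℂ) ^ 2) = ((((k:ℝ) ^ 2 + ξ ^ 2 : ℝ)):ℂ) by push_cast; ring]
    rw [Complex.norm_real, Real.norm_of_nonneg (hDpos ξ).le]
  refine ⟨hnorm, ?_⟩
  have hQpos : (0:ℝ) < (k:ℝ) ^ 2 * (1 + t ^ 2) := by positivity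
  have hpt : ∀ ξ : ℝ, ‖Ψ k ξ‖ ^ 2 ≤
      16 * M ^ 2 / ((k:ℝ) ^ 2 * (1 + t ^ 2)) ^ 2 * (1 + (ξ + (k:ℝ) * t) ^ 2)⁻¹ := by
    intro ξ
    rw [hnorm ξ]
    apply ptbound ((k:ℝ)) t ξ M _ hk2 hM (norm_nonneg _)
    have := hF k (ξ + (k:ℝ) * t)
    rwa [jap_rpow] at this
  have hgint : Integrable (fun ξ : ℝ =>
      16 * M ^ 2 / ((k:ℝ) ^ 2 * (1 + t ^ 2)) ^ 2 * (1 + (ξ + (k:ℝ) * t) ^ 2)⁻¹) :=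
    (integrable_inv_one_add_sq.comp_add_right ((k:ℝ) * t)).const_mul _
  have hgval : (∫ ξ : ℝ, 16 * M ^ 2 / ((k:ℝ) ^ 2 * (1 + t ^ 2)) ^ 2
        * (1 + (ξ + (k:ℝ) * t) ^ 2)⁻¹)
      = 16 * M ^ 2 / ((k:ℝ) ^ 2 * (1 + t ^ 2)) ^ 2 * Real.pi := by
    rw [integral_const_mul,
      integral_add_right_eq_self (fun x : ℝ => (1 + x ^ 2)⁻¹) ((k:ℝ) * t),
      integral_univ_inv_one_add_sq]
  have hRHS : (8:ℝ) * M / (k:ℝ) ^ 2 / (1 + t ^ 2) = 8 * M / ((k:ℝ) ^ 2 * (1 + t ^ 2)) := by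
    field_simp
  rw [hRHS]
  have hRHS0 : 0 ≤ 8 * M / ((k:ℝ) ^ 2 * (1 + t ^ 2)) := by positivity
  by_cases hint : Integrable (fun ξ : ℝ => ‖Ψ k ξ‖ ^ 2)
  · have hle : (∫ ξ : ℝ, ‖Ψ k ξ‖ ^ 2)
        ≤ 16 * M ^ 2 / ((k:ℝ) ^ 2 * (1 + t ^ 2)) ^ 2 * Real.pi := by
      rw [← hgval]
      exact integral_mono hint hgint hpt
    have hle2 : (∫ ξ : ℝ, ‖Ψ k ξ‖ ^ 2) ≤ (8 * M / ((k:ℝ) ^ 2 * (1 + t ^ 2))) ^ 2 := by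
      have hpi : Real.pi ≤ 4 := by linarith [Real.pi_le_four]
      have h4 : 16 * M ^ 2 / ((k:ℝ) ^ 2 * (1 + t ^ 2)) ^ 2 * Real.pi
          ≤ 16 * M ^ 2 / ((k:ℝ) ^ 2 * (1 + t ^ 2)) ^ 2 * 4 :=
        mul_le_mul_of_nonneg_left hpi (by positivity)
      calc (∫ ξ : ℝ, ‖Ψ k ξ‖ ^ 2)
          ≤ 16 * M ^ 2 / ((k:ℝ) ^ 2 * (1 + t ^ 2)) ^ 2 * 4 := le_trans hle h4
        _ = (8 * M / ((k:ℝ) ^ 2 * (1 + t ^ 2))) ^ 2 := by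
            rw [div_pow]; field_simp; ring
    calc Real.sqrt (∫ ξ : ℝ, ‖Ψ k ξ‖ ^ 2)
        ≤ Real.sqrt ((8 * M / ((k:ℝ) ^ 2 * (1 + t ^ 2))) ^ 2) := Real.sqrt_le_sqrt hle2
      _ = 8 * M / ((k:ℝ) ^ 2 * (1 + t ^ 2)) := Real.sqrt_sq hRHS0
  · rw [integral_undef hint, Real.sqrt_zero]
    exact hRHS0
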